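/- Let X be a Banach space and let T ⊂ X × X* be a maximal monotone operator with convex graph. Then the function φ_T + δ_T is a representative function of T: it is lower semicontinuous convex, satisfies (φ_T + δ_T)(x, x*) ≥ ⟨x, x*⟩ for all (x, x*) ∈ X × X*, and (φ_T + δ_T)(x, x*) = ⟨x, x*⟩ if and only if (x, x*) ∈ T. -/

import Mathlib

open Filter Topology
noncomputable section
variable {X : Type*} [NormedAddCommGroup X] [NormedSpace ℝ X]

def pairing (p : X × StrongDual ℝ X) : ℝ := p.2 p.1

def ConvexERealOn {E : Type*} [AddCommGroup E] [Module ℝ E] (f : E → EReal) : Prop :=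
  ∀ x y : E, ∀ a b : ℝ, 0 ≤ a → 0 ≤ b → a + b = 1 →
    f (a • x + b • y) ≤ (a : EReal) * f x + (b : EReal) * f y

def IsGamma {E : Type*} [AddCommGroup E] [Module ℝ E] [TopologicalSpace E] (f : E → EReal) : Prop :=
  LowerSemicontinuous f ∧ ConvexERealOn f ∧ ∀ x, f x ≠ ⊥

def EpiConverges {E : Type*} [TopologicalSpace E] (fs : ℕ → E → EReal) (f : E → EReal) : Prop :=
  ∀ z : E,
    (∃ zs : ℕ → E, Tendsto zs atTop (nhds z) ∧
      Tendsto (fun n => fs n (zs n)) atTop (nhds (f z))) ∧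
    (∀ zs : ℕ → E, Tendsto zs atTop (nhds z) →
      f z ≤ Filter.liminf (fun n => fs n (zs n)) atTop)

def conjFn (f : X × StrongDual ℝ X → EReal) (q : StrongDual ℝ X × X) : EReal :=
  ⨆ p : X × StrongDual ℝ X, (((q.1 p.1 + p.2 q.2 : ℝ) : EReal) - f p)

def Lset (f : X × StrongDual ℝ X → EReal) : Set (X × StrongDual ℝ X) :=
  {p | f p = (pairing p : EReal)}

def MonotoneSet (T : Set (X × StrongDual ℝ X)) : Prop :=
  ∀ p ∈ T, ∀ q ∈ T, 0 ≤ (q.2 - p.2) (q.1 - p.1)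

def MaximalMonotone (T : Set (X × StrongDual ℝ X)) : Prop :=
  MonotoneSet T ∧ ∀ S : Set (X × StrongDual ℝ X), MonotoneSet S → T ⊆ S → S = T

def OpLiminf (Ts : ℕ → Set (X × StrongDual ℝ X)) : Set (X × StrongDual ℝ X) :=
  {p | ∃ zs : ℕ → X × StrongDual ℝ X, (∀ n, zs n ∈ Ts n) ∧ Tendsto zs atTop (nhds p)}

def fitz (T : Set (X × StrongDual ℝ X)) (p : X × StrongDual ℝ X) : EReal :=
  ⨆ q ∈ T, (((p.2 - q.2) (q.1 - p.1) + p.2 p.1 : ℝ) : EReal)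

open Classical in
def indic (T : Set (X × StrongDual ℝ X)) (p : X × StrongDual ℝ X) : EReal :=
  if p ∈ T then 0 else ⊤

def IsRepFunOf (g : X × StrongDual ℝ X → EReal) (T : Set (X × StrongDual ℝ X)) : Prop :=
  IsGamma g ∧ (∀ p, (pairing p : EReal) ≤ g p) ∧ ∀ p, (g p = (pairing p : EReal) ↔ p ∈ T)

def IsReflexive (X : Type*) [NormedAddCommGroup X] [NormedSpace ℝ X] : Prop :=
  Function.Surjective (NormedSpace.inclusionInDoubleDual ℝ X)

def WeakTendstoProd (zs : ℕ → X × StrongDual ℝ X) (z : X × StrongDual ℝ X) : Prop :=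
  (∀ g : StrongDual ℝ X, Tendsto (fun n => g (zs n).1) atTop (nhds (g z.1))) ∧
  (∀ G : StrongDual ℝ (StrongDual ℝ X),
    Tendsto (fun n => G (zs n).2) atTop (nhds (G z.2)))

def MoscoConverges (fs : ℕ → X × StrongDual ℝ X → EReal)
    (f : X × StrongDual ℝ X → EReal) : Prop :=
  ∀ z : X × StrongDual ℝ X,
    (∃ zs : ℕ → X × StrongDual ℝ X, Tendsto zs atTop (nhds z) ∧
      Tendsto (fun n => fs n (zs n)) atTop (nhds (f z))) ∧
    (∀ zs : ℕ → X × StrongDual ℝ X, WeakTendstoProd zs z →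
      f z ≤ Filter.liminf (fun n => fs n (zs n)) atTop)

def Tset (h : X × StrongDual ℝ X → EReal) : Set (X × StrongDual ℝ X) :=
  {p | ((2 * pairing p : ℝ) : EReal) = h p + conjFn h (p.2, p.1)}


section Aux
variable {T : Set (X × StrongDual ℝ X)}

lemma pairing_continuous : Continuous (pairing : X × StrongDual ℝ X → ℝ) :=
  isBoundedBilinearMap_apply.continuous.comp (continuous_snd.prodMk continuous_fst)

lemma fitz_eq_pairing (hmono : MonotoneSet T)
    {p : X × StrongDual ℝ X} (hp : p ∈ T) : fitz T p = (pairing p : EReal) := by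
  apply le_antisymm
  · refine iSup₂_le fun q hq => ?_
    have h := hmono p hp q hq
    rw [EReal.coe_le_coe_iff]
    have h2 : (p.2 - q.2) (q.1 - p.1) = -((q.2 - p.2) (q.1 - p.1)) := by
      simp [ContinuousLinearMap.sub_apply, map_sub]; ring
    simp only [pairing]
    linarith [h2 ▸ neg_nonpos_of_nonneg h]
  · have e : ((p.2 - p.2) (p.1 - p.1) + p.2 p.1 : ℝ) = pairing p := by simp [pairing]
    unfold fitz
    simpa only [e] using le_iSup₂ (f := fun q (_ : q ∈ T) =>
      (((p.2 - q.2) (q.1 - p.1) + p.2 p.1 : ℝ) : EReal)) p hp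

lemma fitz_ne_bot (hne : T.Nonempty)
    (p : X × StrongDual ℝ X) : fitz T p ≠ ⊥ := by
  obtain ⟨q, hq⟩ := hne
  have := le_iSup₂ (f := fun q (_ : q ∈ T) =>
    (((p.2 - q.2) (q.1 - p.1) + p.2 p.1 : ℝ) : EReal)) q hq
  intro h
  unfold fitz at h
  rw [h, le_bot_iff] at this
  exact EReal.coe_ne_bot _ this

lemma maxmono_nonempty (hmax : MaximalMonotone T) : T.Nonempty := by
  by_contra h
  rw [Set.not_nonempty_iff_eq_empty] at h
  have hm : MonotoneSet ({((0 : X), (0 : StrongDual ℝ X))} : Set _) := by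
    rintro p hp q hq
    simp only [Set.mem_singleton_iff] at hp hq
    subst hp; subst hq; simp
  have := hmax.2 _ hm (by simp [h])
  rw [h] at this
  exact (Set.singleton_ne_empty _) this

lemma maxmono_closed (hmax : MaximalMonotone T) : IsClosed T := by
  refine isClosed_of_closure_subset fun p hp => ?_
  have hrel : ∀ b ∈ T, 0 ≤ (b.2 - p.2) (b.1 - p.1) := by
    intro b hb
    have hconts : Continuous fun z : X × StrongDual ℝ X => (b.2 - z.2) (b.1 - z.1) :=
      isBoundedBilinearMap_apply.continuous.comp
        ((continuous_const.sub continuous_snd).prodMk (continuous_const.sub continuous_fst))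
    have hsub : T ⊆ {z | 0 ≤ (b.2 - z.2) (b.1 - z.1)} := fun z hz => hmax.1 z hz b hb
    exact closure_minimal hsub (isClosed_le continuous_const hconts) hp
  have hsymm : ∀ a b : X × StrongDual ℝ X,
      (b.2 - a.2) (b.1 - a.1) = (a.2 - b.2) (a.1 - b.1) := by
    intro a b
    simp [ContinuousLinearMap.sub_apply, map_sub]; ring
  have hS : MonotoneSet (insert p T) := by
    intro a ha b hb
    rcases Set.mem_insert_iff.mp ha with ha' | ha' <;>
      rcases Set.mem_insert_iff.mp hb with hb' | hb'
    · rw [ha', hb']; simp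
    · rw [ha']; exact hrel b hb'
    · rw [hb', hsymm a p]; exact hrel a ha'
    · exact hmax.1 a ha' b hb'
  have := hmax.2 _ hS (Set.subset_insert _ _)
  exact this ▸ Set.mem_insert p T

open Classical in
lemma fitz_add_indic (hmono : MonotoneSet T) (hne : T.Nonempty)
    (p : X × StrongDual ℝ X) :
    fitz T p + indic T p = if p ∈ T then (pairing p : EReal) else ⊤ := by
  by_cases hp : p ∈ T
  · simp [indic, hp, fitz_eq_pairing hmono hp]
  · simp only [indic, hp, if_false]
    exact EReal.add_top_of_ne_bot (fitz_ne_bot hne p)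

end Aux

/-- For a maximal monotone operator `T` with convex graph,
`φ_T + δ_T` is a representative function of `T`. -/
theorem stmt14 [CompleteSpace X]
    (T : Set (X × StrongDual ℝ X))
    (hmax : MaximalMonotone T) (hconv : Convex ℝ T) :
    IsRepFunOf (fun p => fitz T p + indic T p) T := by
  classical
  have hne := maxmono_nonempty hmax
  have hclosed := maxmono_closed hmax
  have hchar : (fun p => fitz T p + indic T p) =
      fun p => if p ∈ T then (pairing p : EReal) else ⊤ :=
    funext (fitz_add_indic hmax.1 hne)
  rw [hchar]
  refine ⟨⟨?_, ?_, ?_⟩, ?_, ?_⟩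
  · -- lower semicontinuous
    intro p
    by_cases hp : p ∈ T
    · intro y hy
      simp only [if_pos hp] at hy
      have hcont : ContinuousAt (fun q : X × StrongDual ℝ X =>
          ((pairing q : ℝ) : EReal)) p :=
        (continuous_coe_real_ereal.comp pairing_continuous).continuousAt
      filter_upwards [hcont.eventually (eventually_gt_nhds hy)] with q hq
      by_cases hqT : q ∈ T
      · simpa only [if_pos hqT] using hq
      · simp only [if_neg hqT]; exact hy.trans_le le_top
    · intro y hy
      simp only [if_neg hp] at hy
      filter_upwards [hclosed.isOpen_compl.mem_nhds hp] with q hq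
      simp only [if_neg hq]
      exact hy
  · -- convex
    intro x y a b ha hb hab
    rcases ha.eq_or_lt with rfl | ha'
    · have hb1 : b = 1 := by linarith
      subst hb1; simp
    rcases hb.eq_or_lt with rfl | hb'
    · have ha1 : a = 1 := by linarith
      subst ha1; simp
    by_cases hx : x ∈ T
    · by_cases hy : y ∈ T
      · have hz : a • x + b • y ∈ T := hconv hx hy ha hb hab
        simp only [if_pos hz, if_pos hx, if_pos hy, ← EReal.coe_mul,
          ← EReal.coe_add, EReal.coe_le_coe_iff]
        have expand : pairing (a • x + b • y) =
            a * (a * x.2 x.1) + a * (b * x.2 y.1) + (b * (a * y.2 x.1) + b * (b * y.2 y.1)) := by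
          simp [pairing, map_add, map_smul, smul_eq_mul]; ring
        have hm := hmax.1 x hx y hy
        simp only [ContinuousLinearMap.sub_apply, map_sub] at hm
        rw [expand]
        simp only [pairing]
        have hb1 : b = 1 - a := by linarith
        have key : a * x.2 x.1 + b * y.2 y.1 -
            (a * (a * x.2 x.1) + a * (b * x.2 y.1) + (b * (a * y.2 x.1) + b * (b * y.2 y.1)))
            = a * b * (y.2 y.1 - x.2 y.1 - (y.2 x.1 - x.2 x.1)) := by
          rw [hb1]; ring
        linarith [mul_nonneg (mul_nonneg ha hb) hm, key]
      · have h1 : (b : EReal) * (if y ∈ T then (pairing y : EReal) else ⊤) = ⊤ := by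
          rw [if_neg hy]; exact EReal.coe_mul_top_of_pos hb'
        have h2 : (a : EReal) * (if x ∈ T then (pairing x : EReal) else ⊤) ≠ ⊥ := by
          rw [if_pos hx, ← EReal.coe_mul]; exact EReal.coe_ne_bot _
        simp only []
        rw [h1, EReal.add_top_of_ne_bot h2]
        exact le_top
    · have h1 : (a : EReal) * (if x ∈ T then (pairing x : EReal) else ⊤) = ⊤ := by
        rw [if_neg hx]; exact EReal.coe_mul_top_of_pos ha'
      have h2 : (b : EReal) * (if y ∈ T then (pairing y : EReal) else ⊤) ≠ ⊥ := by
        by_cases hy : y ∈ T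
        · rw [if_pos hy, ← EReal.coe_mul]; exact EReal.coe_ne_bot _
        · rw [if_neg hy, EReal.coe_mul_top_of_pos hb']; exact top_ne_bot
      simp only []
      rw [h1, EReal.top_add_of_ne_bot h2]
      exact le_top
  · -- never bot
    intro p
    by_cases hp : p ∈ T
    · simp only [if_pos hp]; exact EReal.coe_ne_bot _
    · simp only [if_neg hp]; exact top_ne_bot
  · -- ≥ pairing
    intro p
    by_cases hp : p ∈ T
    · simp only [if_pos hp]; exact le_refl _
    · simp only [if_neg hp]; exact le_top
  · -- equality iff
    intro p
    by_cases hp : p ∈ T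
    · simp [hp]
    · simp only [if_neg hp, iff_false, hp]
      exact fun h => EReal.coe_ne_top _ h.symm
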